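/- For a single-step (deterministic, full-batch) version of the result: if f is convex, differentiable, L-smooth, and the step size is η = min{(f(x) - f*)/(c‖∇f(x)‖²), η_max} with c > 1, then one step of gradient descent x⁺ = x - η∇f(x) satisfies ‖x⁺ - x*‖² ≤ ‖x - x*‖² - min{(c-1)/(c²L), (2 - 1/c)η_max}·(f(x) - f*). -/

import Mathlib

open scoped RealInnerProductSpace

/-- One step of gradient descent with the capped stochastic-Polyak-type step size
`η = min ((f x - f*)/(c ‖∇f x‖²)) η_max` (deterministic, full-batch case). -/
theorem capped_polyak_step_decrease
    {E : Type*} [NormedAddCommGroup E] [InnerProductSpace ℝ E]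
    (f : E → ℝ) (g : E → E) (L : ℝ) (hL : 0 < L)
    (hconv : ∀ y z : E, f y + ⟪g y, z - y⟫ ≤ f z)
    (hsmooth : ∀ y z : E, f z ≤ f y + ⟪g y, z - y⟫ + L / 2 * ‖z - y‖ ^ 2)
    (xstar : E) (fstar : ℝ) (hfstar : fstar = f xstar)
    (hmin : ∀ y : E, f xstar ≤ f y)
    (c ηmax : ℝ) (hc : 1 < c) (hηmax : 0 < ηmax)
    (x : E) (hg : g x ≠ 0)
    (η : ℝ) (hη : η = min ((f x - fstar) / (c * ‖g x‖ ^ 2)) ηmax)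
    (xplus : E) (hxplus : xplus = x - η • g x) :
    ‖xplus - xstar‖ ^ 2 ≤
      ‖x - xstar‖ ^ 2 -
        min ((c - 1) / (c ^ 2 * L)) ((2 - 1 / c) * ηmax) * (f x - fstar) := by
  have hc0 : (0:ℝ) < c := lt_trans one_pos hc
  have hG : (0:ℝ) < ‖g x‖ ^ 2 := pow_pos (norm_pos_iff.mpr hg) 2
  set G : ℝ := ‖g x‖ ^ 2 with hGdef
  set Δ : ℝ := f x - fstar with hΔdef
  -- smoothness consequence: G ≤ 2 L Δ
  have hkey : G ≤ 2 * L * Δ := by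
    have h1 := hsmooth x (x - (1/L) • g x)
    have h2 := hmin (x - (1/L) • g x)
    have e0 : (x - (1/L) • g x) - x = -((1/L) • g x) := by abel
    have e1 : ⟪g x, (x - (1/L) • g x) - x⟫ = -(1/L) * G := by
      rw [e0, inner_neg_right, real_inner_smul_right, real_inner_self_eq_norm_sq]
      ring
    have e2 : ‖(x - (1/L) • g x) - x‖ ^ 2 = (1/L)^2 * G := by
      rw [e0, norm_neg, norm_smul, mul_pow]
      simp [abs_of_pos (by positivity : (0:ℝ) < 1/L)]
      exact Or.inl hGdef.symm
    rw [e1, e2] at h1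
    have h3 : f xstar ≤ f x + -(1/L) * G + L / 2 * ((1/L)^2 * G) := le_trans h2 h1
    have hE : f x + -(1/L) * G + L / 2 * ((1/L)^2 * G) = f x - G / (2*L) := by
      field_simp
      ring
    rw [hE] at h3
    rw [hΔdef, hfstar]
    have h4 : G / (2*L) ≤ f x - f xstar := by linarith
    have h5 := (div_le_iff₀ (by positivity : (0:ℝ) < 2*L)).mp h4
    linarith [h5]
  have hΔ : 0 < Δ := by nlinarith
  -- convexity consequence
  have hD : Δ ≤ ⟪g x, x - xstar⟫ := by
    have h := hconv x xstar
    have e : ⟪g x, xstar - x⟫ = -⟪g x, x - xstar⟫ := by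
      rw [← inner_neg_right, neg_sub]
    rw [e] at h
    rw [hΔdef, hfstar]
    linarith
  set D : ℝ := ⟪g x, x - xstar⟫ with hDdef
  clear_value D
  -- expand the squared norm
  have hexp : ‖xplus - xstar‖ ^ 2 = ‖x - xstar‖ ^ 2 - 2 * η * D + η^2 * G := by
    have e : xplus - xstar = (x - xstar) - η • g x := by rw [hxplus]; abel
    rw [e, norm_sub_sq_real, real_inner_smul_right, norm_smul, mul_pow,
      real_inner_comm]
    rw [hDdef, hGdef, Real.norm_eq_abs, sq_abs]
    ring
  rw [hexp]
  clear_value G Δ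
  clear hGdef hΔdef hxplus hexp
  set m : ℝ := min ((c - 1) / (c ^ 2 * L)) ((2 - 1 / c) * ηmax) with hmdef
  clear_value m
  -- η > 0
  have hηa : 0 < Δ / (c * G) := by positivity
  have hη0 : 0 < η := by rw [hη]; exact lt_min hηa hηmax
  -- suffices: m * Δ + η^2 * G ≤ 2 * η * Δ  (since D ≥ Δ, η > 0)
  have hsuff : m * Δ + η^2 * G ≤ 2 * η * Δ → m * Δ + η^2 * G ≤ 2 * η * D := by
    intro h
    nlinarith [mul_le_mul_of_nonneg_left hD (le_of_lt hη0)]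
  have hmain : m * Δ + η^2 * G ≤ 2 * η * Δ := by
    rcases min_cases (Δ / (c * G)) ηmax with ⟨heq, hle⟩ | ⟨heq, hle⟩
    · -- η = Δ/(cG)
      have hηval : η = Δ / (c * G) := by rw [hη, heq]
      have hm : m ≤ (c - 1) / (c ^ 2 * L) := hmdef ▸ min_le_left _ _
      have hGne : (c:ℝ) * G ≠ 0 := by positivity
      rw [hηval]
      have h1 : m * Δ ≤ (c - 1) / (c ^ 2 * L) * Δ :=
        mul_le_mul_of_nonneg_right hm (le_of_lt hΔ)
      have hGΔ : G * Δ ≤ 2 * L * Δ ^ 2 := by nlinarith [mul_le_mul_of_nonneg_right hkey hΔ.le]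
      have key2 : (c - 1) * Δ * G + L * Δ ^ 2 ≤ 2 * c * L * Δ ^ 2 := by
        have := mul_le_mul_of_nonneg_left hGΔ (by linarith : (0:ℝ) ≤ c - 1)
        nlinarith [mul_pos hL (mul_pos hΔ hΔ)]
      have e : (c - 1) / (c ^ 2 * L) * Δ + (Δ / (c * G))^2 * G
          = ((c - 1) * Δ * G + L * Δ ^ 2) / (c ^ 2 * L * G) := by
        field_simp
      have e2 : 2 * (Δ / (c * G)) * Δ = (2 * c * L * Δ ^ 2) / (c ^ 2 * L * G) := by
        field_simp
      have h2 : (c - 1) / (c ^ 2 * L) * Δ + (Δ / (c * G))^2 * G ≤ 2 * (Δ / (c * G)) * Δ := by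
        rw [e, e2]
        gcongr
      linarith
    · -- η = ηmax
      have hηval : η = ηmax := by rw [hη, heq]
      have hm : m ≤ (2 - 1/c) * ηmax := hmdef ▸ min_le_right _ _
      have hbound : ηmax * G ≤ Δ / c := by
        have h := (le_div_iff₀ (by positivity : (0:ℝ) < c * G)).mp hle.le
        rw [le_div_iff₀ hc0]
        have heq2 : ηmax * G * c = ηmax * (c * G) := by ring
        linarith
      rw [hηval]
      have h1 : m * Δ ≤ (2 - 1/c) * ηmax * Δ :=
        mul_le_mul_of_nonneg_right hm (le_of_lt hΔ)
      have h2 : ηmax * (ηmax * G) ≤ ηmax * (Δ / c) :=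
        mul_le_mul_of_nonneg_left hbound (le_of_lt hηmax)
      have h3 : (2 - 1/c) * ηmax * Δ + ηmax * (Δ / c) = 2 * ηmax * Δ := by
        ring
      have h4 : ηmax * (ηmax * G) = ηmax ^ 2 * G := by ring
      nlinarith [h1, h2, h3, h4]
  linarith [hsuff hmain]
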